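/- Let p > 1, let B ⊂ ℝⁿ be an open ball, let γ ∈ (0,1], and let w : B → ℝ^N be a function such that the composition V_p ∘ w : B → ℝ^N is Hölder continuous on B with exponent γ, i.e. there is H ≥ 0 with |V_p(w(x)) − V_p(w(y))| ≤ H |x − y|^γ for all x, y ∈ B. Then w is Hölder continuous on B with exponent β := min{1, 2/p} · γ, i.e. there exists H' ≥ 0 with |w(x) − w(y)| ≤ H' |x − y|^β for all x, y ∈ B. -/

import Mathlib

noncomputable def Vp (p : ℝ) {E : Type*} [NormedAddCommGroup E] [NormedSpace ℝ E] (z : E) : E :=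
  ((1 + ‖z‖ ^ 2) ^ ((p - 2) / 4)) • z

open RealInnerProductSpace in
/-- Quadratic-form lower bound for the derivative of `Vp` along a segment. -/
lemma vp_inner_key {E : Type*} [NormedAddCommGroup E] [InnerProductSpace ℝ E]
    (p R : ℝ) (hp : 1 < p) (z z' : E) (hz : ‖z‖ ≤ R) (hz' : ‖z'‖ ≤ R) :
    min 1 (p / 2) * min 1 ((1 + R ^ 2) ^ ((p - 2) / 4)) * ‖z - z'‖ ^ 2
      ≤ ⟪Vp p z - Vp p z', z - z'⟫ := by
  set m : ℝ := (p - 2) / 4 with hm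
  set u : E := z - z' with hu
  set c : ℝ := min 1 (p / 2) * min 1 ((1 + R ^ 2) ^ m) with hc
  set W : ℝ → E := fun t => z' + t • u with hW
  have hWd : ∀ t : ℝ, HasDerivAt W u t := fun t => by
    simpa [hW] using ((hasDerivAt_id t).smul_const u).const_add z'
  have hfpos : ∀ t : ℝ, (0 : ℝ) < 1 + ‖W t‖ ^ 2 := fun t => by positivity
  have hfd : ∀ t : ℝ, HasDerivAt (fun t => 1 + ‖W t‖ ^ 2) (2 * ⟪W t, u⟫) t := by
    intro t
    have h1 : HasDerivAt (fun t => (1 : ℝ) + ⟪W t, W t⟫) (⟪W t, u⟫ + ⟪u, W t⟫) t :=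
      (HasDerivAt.inner ℝ (hWd t) (hWd t)).const_add 1
    have e1 : (fun t => (1 : ℝ) + ⟪W t, W t⟫) = fun t => 1 + ‖W t‖ ^ 2 := by
      funext s; rw [real_inner_self_eq_norm_sq]
    have e2 : ⟪W t, u⟫ + ⟪u, W t⟫ = 2 * ⟪W t, u⟫ := by
      rw [real_inner_comm u (W t)]; ring
    rw [e1, e2] at h1; exact h1
  have hgd : ∀ t : ℝ, HasDerivAt (fun t => (1 + ‖W t‖ ^ 2) ^ m)
      (2 * ⟪W t, u⟫ * m * (1 + ‖W t‖ ^ 2) ^ (m - 1)) t := fun t =>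
    (hfd t).rpow_const (Or.inl (hfpos t).ne')
  have hVd : ∀ t : ℝ, HasDerivAt (fun t => Vp p (W t))
      ((1 + ‖W t‖ ^ 2) ^ m • u + (2 * ⟪W t, u⟫ * m * (1 + ‖W t‖ ^ 2) ^ (m - 1)) • W t) t := by
    intro t
    have := (hgd t).smul (hWd t)
    exact this
  set q : ℝ → ℝ := fun t =>
    (1 + ‖W t‖ ^ 2) ^ m * ‖u‖ ^ 2 + 2 * ⟪W t, u⟫ ^ 2 * m * (1 + ‖W t‖ ^ 2) ^ (m - 1) with hq
  have hψd : ∀ t : ℝ, HasDerivAt (fun t => ⟪Vp p (W t), u⟫) (q t) t := by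
    intro t
    have := HasDerivAt.inner ℝ (hVd t) (hasDerivAt_const t u)
    have e : ⟪Vp p (W t), (0 : E)⟫ +
        ⟪(1 + ‖W t‖ ^ 2) ^ m • u + (2 * ⟪W t, u⟫ * m * (1 + ‖W t‖ ^ 2) ^ (m - 1)) • W t, u⟫
        = q t := by
      rw [inner_zero_right, inner_add_left, real_inner_smul_left, real_inner_smul_left,
        real_inner_self_eq_norm_sq]
      ring
    rw [e] at this; exact this
  -- bound on q on the segment
  have hqbound : ∀ t ∈ Set.Icc (0 : ℝ) 1, c * ‖u‖ ^ 2 ≤ q t := by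
    intro t ht
    have hWt : ‖W t‖ ≤ R := by
      have e : W t = (1 - t) • z' + t • z := by
        simp only [hW, hu]; module
      calc ‖W t‖ = ‖(1 - t) • z' + t • z‖ := by rw [e]
        _ ≤ ‖(1 - t) • z'‖ + ‖t • z‖ := norm_add_le _ _
        _ = (1 - t) * ‖z'‖ + t * ‖z‖ := by
            rw [norm_smul, norm_smul, Real.norm_of_nonneg (by linarith [ht.2]),
              Real.norm_of_nonneg ht.1]
        _ ≤ (1 - t) * R + t * R := by
            have h0R : (0:ℝ) ≤ R := le_trans (norm_nonneg z') hz'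
            gcongr <;> linarith [ht.1, ht.2]
        _ = R := by ring
    set f : ℝ := 1 + ‖W t‖ ^ 2 with hf
    have hf1 : (1 : ℝ) ≤ f := by
      have := sq_nonneg ‖W t‖; simp only [hf]; nlinarith
    have hf0 : (0 : ℝ) < f := by positivity
    have hfR : f ≤ 1 + R ^ 2 := by
      have := pow_le_pow_left₀ (norm_nonneg (W t)) hWt 2
      simp only [hf]; linarith
    have hCS : ⟪W t, u⟫ ^ 2 ≤ f * ‖u‖ ^ 2 := by
      have h1 : |⟪W t, u⟫| ≤ ‖W t‖ * ‖u‖ := abs_real_inner_le_norm _ _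
      have h2 : ⟪W t, u⟫ ^ 2 ≤ (‖W t‖ * ‖u‖) ^ 2 := by
        rw [← sq_abs]; exact pow_le_pow_left₀ (abs_nonneg _) h1 2
      have : (‖W t‖ * ‖u‖) ^ 2 ≤ f * ‖u‖ ^ 2 := by
        rw [mul_pow, hf]; nlinarith [sq_nonneg (‖u‖), norm_nonneg u]
      linarith
    have hc0 : (0 : ℝ) ≤ c :=
      mul_nonneg (le_min zero_le_one (by linarith))
        (le_min zero_le_one (Real.rpow_nonneg (by positivity) _))
    rcases le_or_gt 0 m with hm0 | hm0
    · -- p ≥ 2 case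
      have hfm1 : (1 : ℝ) ≤ f ^ m := Real.one_le_rpow hf1 hm0
      have hc1 : c ≤ 1 := by
        apply mul_le_one₀ (min_le_left _ _) _ (min_le_left _ _)
        exact le_min zero_le_one (Real.rpow_nonneg (by positivity) _)
      have hterm2 : 0 ≤ 2 * ⟪W t, u⟫ ^ 2 * m * f ^ (m - 1) := by
        apply mul_nonneg (by positivity) (Real.rpow_nonneg hf0.le _)
      have : c * ‖u‖ ^ 2 ≤ f ^ m * ‖u‖ ^ 2 := by
        nlinarith [sq_nonneg ‖u‖]
      simp only [hq, ← hf]; linarith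
    · -- 1 < p < 2 case
      have hfm : (1 + R ^ 2) ^ m ≤ f ^ m :=
        Real.rpow_le_rpow_of_nonpos hf0 hfR hm0.le
      have hfm0 : (0 : ℝ) < f ^ m := Real.rpow_pos_of_pos hf0 _
      have hkey : 2 * ⟪W t, u⟫ ^ 2 * m * f ^ (m - 1) ≥ 2 * m * (f ^ m * ‖u‖ ^ 2) := by
        have hfm1f : f ^ (m - 1) * f = f ^ m := by
          rw [← Real.rpow_add_one hf0.ne' (m - 1)]; ring_nf
        have h1 : ⟪W t, u⟫ ^ 2 * f ^ (m - 1) ≤ f * ‖u‖ ^ 2 * f ^ (m - 1) :=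
          mul_le_mul_of_nonneg_right hCS (Real.rpow_nonneg hf0.le _)
        have h2 := mul_le_mul_of_nonpos_left h1 (by linarith : 2 * m ≤ 0)
        have e : f * ‖u‖ ^ 2 * f ^ (m - 1) = f ^ m * ‖u‖ ^ 2 := by
          rw [← hfm1f]; ring
        rw [e] at h2
        nlinarith [h2]
      have hp2 : 1 + 2 * m = p / 2 := by rw [hm]; ring
      have hcle : c ≤ p / 2 * (1 + R ^ 2) ^ m := by
        apply mul_le_mul (min_le_right _ _) (min_le_right _ _)
          (le_min zero_le_one (Real.rpow_nonneg (by positivity) _)) (by linarith)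
      have hq1 : (p / 2) * (f ^ m) * ‖u‖ ^ 2 ≤ q t := by
        simp only [hq, ← hf]
        have e : (p / 2) * (f ^ m) * ‖u‖ ^ 2 = f ^ m * ‖u‖ ^ 2 + 2 * m * (f ^ m * ‖u‖ ^ 2) := by
          rw [hm]; ring
        rw [e]; linarith [hkey]
      have h2 : c * ‖u‖ ^ 2 ≤ (p / 2) * (f ^ m) * ‖u‖ ^ 2 := by
        have hA : c ≤ p / 2 * f ^ m :=
          hcle.trans (mul_le_mul_of_nonneg_left hfm (by linarith))
        exact mul_le_mul_of_nonneg_right hA (sq_nonneg _)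
      exact h2.trans hq1
  -- monotonicity of the shifted function
  set φ : ℝ → ℝ := fun t => ⟪Vp p (W t), u⟫ - c * ‖u‖ ^ 2 * t with hφ
  have hφd : ∀ t : ℝ, HasDerivAt φ (q t - c * ‖u‖ ^ 2) t := fun t => by
    have h := (hψd t).sub ((hasDerivAt_id t).const_mul (c * ‖u‖ ^ 2))
    rw [mul_one] at h; exact h
  have hmono : MonotoneOn φ (Set.Icc 0 1) := by
    apply monotoneOn_of_deriv_nonneg (convex_Icc 0 1)
    · exact fun t _ => ((hφd t).continuousAt).continuousWithinAt
    · intro t ht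
      exact ((hφd t).differentiableAt).differentiableWithinAt
    · intro t ht
      rw [(hφd t).deriv]
      have ht' : t ∈ Set.Icc (0:ℝ) 1 := interior_subset ht
      linarith [hqbound t ht']
  have h01 : φ 0 ≤ φ 1 := hmono (Set.mem_Icc.mpr ⟨le_rfl, zero_le_one⟩)
    (Set.mem_Icc.mpr ⟨zero_le_one, le_rfl⟩) zero_le_one
  have hW0 : W 0 = z' := by simp [hW]
  have hW1 : W 1 = z := by simp [hW, hu]
  have := h01
  simp only [hφ, hW0, hW1, mul_zero, mul_one, sub_zero] at this
  rw [inner_sub_left]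
  linarith

open RealInnerProductSpace in
lemma vp_norm_key {E : Type*} [NormedAddCommGroup E] [InnerProductSpace ℝ E]
    (p R : ℝ) (hp : 1 < p) (z z' : E) (hz : ‖z‖ ≤ R) (hz' : ‖z'‖ ≤ R) :
    min 1 (p / 2) * min 1 ((1 + R ^ 2) ^ ((p - 2) / 4)) * ‖z - z'‖
      ≤ ‖Vp p z - Vp p z'‖ := by
  set c : ℝ := min 1 (p / 2) * min 1 ((1 + R ^ 2) ^ ((p - 2) / 4)) with hc
  rcases eq_or_ne z z' with rfl | hne
  · simp
  · have h1 := vp_inner_key p R hp z z' hz hz'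
    have h2 : ⟪Vp p z - Vp p z', z - z'⟫ ≤ ‖Vp p z - Vp p z'‖ * ‖z - z'‖ :=
      real_inner_le_norm _ _
    have h3 : (0 : ℝ) < ‖z - z'‖ := by
      rw [norm_pos_iff, sub_ne_zero]; exact hne
    have h4 : c * ‖z - z'‖ * ‖z - z'‖ ≤ ‖Vp p z - Vp p z'‖ * ‖z - z'‖ := by
      have e : c * ‖z - z'‖ * ‖z - z'‖ = c * ‖z - z'‖ ^ 2 := by ring
      rw [e]; exact h1.trans h2
    exact le_of_mul_le_mul_right h4 h3

lemma vp_coercive {E : Type*} [NormedAddCommGroup E] [NormedSpace ℝ E]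
    (p : ℝ) (hp : 1 < p) (z : E) : ‖z‖ ≤ max 1 (2 * ‖Vp p z‖ ^ 2) := by
  rcases le_or_gt ‖z‖ 1 with h | h
  · exact le_max_of_le_left h
  · apply le_max_of_le_right
    set a : ℝ := ‖z‖ with ha
    have ha1 : (1 : ℝ) < a := h
    have ha0 : (0 : ℝ) < a := by linarith
    have hnorm : ‖Vp p z‖ = (1 + a ^ 2) ^ ((p - 2) / 4) * a := by
      rw [Vp, norm_smul, Real.norm_eq_abs,
        abs_of_pos (Real.rpow_pos_of_pos (by positivity) _)]
    have h1 : (1 + a ^ 2) ^ (-(4 : ℝ)⁻¹) ≤ (1 + a ^ 2) ^ ((p - 2) / 4) :=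
      Real.rpow_le_rpow_of_exponent_le (by nlinarith) (by linarith)
    have h2 : (2 * a ^ 2) ^ (-(4 : ℝ)⁻¹) ≤ (1 + a ^ 2) ^ (-(4 : ℝ)⁻¹) :=
      Real.rpow_le_rpow_of_nonpos (by positivity) (by nlinarith) (by norm_num)
    have h3 : (2 * a ^ 2) ^ (-(4 : ℝ)⁻¹) * a ≤ ‖Vp p z‖ := by
      rw [hnorm]; exact mul_le_mul_of_nonneg_right (h2.trans h1) ha0.le
    have h4 : ((2 * a ^ 2) ^ (-(4 : ℝ)⁻¹) * a) ^ 2 ≤ ‖Vp p z‖ ^ 2 :=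
      pow_le_pow_left₀ (by positivity) h3 2
    have h5 : ((2 * a ^ 2) ^ (-(4 : ℝ)⁻¹)) ^ 2 = (2 * a ^ 2) ^ (-(2 : ℝ)⁻¹) := by
      rw [← Real.rpow_natCast ((2 * a ^ 2) ^ (-(4 : ℝ)⁻¹)) 2,
        ← Real.rpow_mul (by positivity)]
      norm_num
    have h6 : (2 * a ^ 2) ^ (-(2 : ℝ)⁻¹) = (Real.sqrt (2 * a ^ 2))⁻¹ := by
      rw [Real.rpow_neg (by positivity), Real.sqrt_eq_rpow]
      norm_num
    have h7 : Real.sqrt (2 * a ^ 2) ≤ 2 * a := by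
      have h7a : Real.sqrt (2 * a ^ 2) ≤ Real.sqrt ((2 * a) ^ 2) :=
        Real.sqrt_le_sqrt (by nlinarith)
      rwa [Real.sqrt_sq (by positivity)] at h7a
    have hs0 : (0 : ℝ) < Real.sqrt (2 * a ^ 2) := Real.sqrt_pos.mpr (by positivity)
    have h8 : (2 * a)⁻¹ ≤ (Real.sqrt (2 * a ^ 2))⁻¹ := by
      apply inv_anti₀ hs0 h7
    have h9 : a / 2 ≤ ‖Vp p z‖ ^ 2 := by
      have e1 : ((2 * a ^ 2) ^ (-(4 : ℝ)⁻¹) * a) ^ 2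
          = (Real.sqrt (2 * a ^ 2))⁻¹ * a ^ 2 := by
        rw [mul_pow, h5, h6]
      have e2 : (2 * a)⁻¹ * a ^ 2 = a / 2 := by
        field_simp
      have h10 : (2 * a)⁻¹ * a ^ 2 ≤ (Real.sqrt (2 * a ^ 2))⁻¹ * a ^ 2 :=
        mul_le_mul_of_nonneg_right h8 (by positivity)
      rw [e2] at h10
      rw [e1] at h4
      linarith
    linarith

theorem stmt_11 (n N : ℕ) (hn : 1 ≤ n) (hN : 1 ≤ N) (p : ℝ) (hp : 1 < p)
    (x₀ : EuclideanSpace ℝ (Fin n)) (ρ : ℝ) (hρ : 0 < ρ)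
    (γ : ℝ) (hγ0 : 0 < γ) (hγ1 : γ ≤ 1)
    (w : EuclideanSpace ℝ (Fin n) → EuclideanSpace ℝ (Fin N))
    (H : ℝ) (hH : 0 ≤ H)
    (hHol : ∀ x ∈ Metric.ball x₀ ρ, ∀ y ∈ Metric.ball x₀ ρ,
      ‖Vp p (w x) - Vp p (w y)‖ ≤ H * ‖x - y‖ ^ γ) :
    ∃ H' : ℝ, 0 ≤ H' ∧ ∀ x ∈ Metric.ball x₀ ρ, ∀ y ∈ Metric.ball x₀ ρ,
      ‖w x - w y‖ ≤ H' * ‖x - y‖ ^ (min 1 (2 / p) * γ) := by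
  have hx₀ : x₀ ∈ Metric.ball x₀ ρ := Metric.mem_ball_self hρ
  set M : ℝ := ‖Vp p (w x₀)‖ + H * (2 * ρ) ^ γ with hM
  have hMV : ∀ x ∈ Metric.ball x₀ ρ, ‖Vp p (w x)‖ ≤ M := by
    intro x hx
    have h1 := hHol x hx x₀ hx₀
    have hd : ‖x - x₀‖ ≤ 2 * ρ := by
      have := Metric.mem_ball.mp hx
      rw [← dist_eq_norm]; linarith
    have h2 : ‖x - x₀‖ ^ γ ≤ (2 * ρ) ^ γ :=
      Real.rpow_le_rpow (norm_nonneg _) hd hγ0.le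
    have h3 := norm_sub_norm_le (Vp p (w x)) (Vp p (w x₀))
    have h4 : H * ‖x - x₀‖ ^ γ ≤ H * (2 * ρ) ^ γ :=
      mul_le_mul_of_nonneg_left h2 hH
    rw [hM]; linarith
  set R : ℝ := max 1 (2 * M ^ 2) with hR
  have hM0 : 0 ≤ M := by
    have := hMV x₀ hx₀; have := norm_nonneg (Vp p (w x₀)); linarith
  have hwR : ∀ x ∈ Metric.ball x₀ ρ, ‖w x‖ ≤ R := by
    intro x hx
    refine (vp_coercive p hp (w x)).trans (max_le_max le_rfl ?_)
    have := hMV x hx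
    nlinarith [norm_nonneg (Vp p (w x))]
  set c : ℝ := min 1 (p / 2) * min 1 ((1 + R ^ 2) ^ ((p - 2) / 4)) with hc
  have hc0 : (0 : ℝ) < c :=
    mul_pos (lt_min one_pos (by linarith))
      (lt_min one_pos (Real.rpow_pos_of_pos (by positivity) _))
  set β : ℝ := min 1 (2 / p) * γ with hβ
  have hθ0 : (0 : ℝ) < min 1 (2 / p) := lt_min one_pos (by positivity)
  have hβ0 : (0 : ℝ) < β := mul_pos hθ0 hγ0
  have hβγ : β ≤ γ := by
    have h := min_le_left (1 : ℝ) (2 / p)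
    rw [hβ]; nlinarith
  refine ⟨H / c * (2 * ρ) ^ (γ - β),
    mul_nonneg (div_nonneg hH hc0.le) (Real.rpow_nonneg (by linarith) _), ?_⟩
  intro x hx y hy
  have hkey := vp_norm_key p R hp (w x) (w y) (hwR x hx) (hwR y hy)
  have hHo := hHol x hx y hy
  have h1 : c * ‖w x - w y‖ ≤ H * ‖x - y‖ ^ γ := hkey.trans hHo
  have hxy : ‖x - y‖ ≤ 2 * ρ := by
    have d1 := Metric.mem_ball.mp hx
    have d2 := Metric.mem_ball.mp hy
    have := dist_triangle x x₀ y
    rw [← dist_eq_norm]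
    rw [dist_comm y x₀] at d2
    linarith
  have h2 : ‖x - y‖ ^ γ ≤ (2 * ρ) ^ (γ - β) * ‖x - y‖ ^ β := by
    rcases eq_or_lt_of_le (norm_nonneg (x - y)) with h0 | h0
    · rw [← h0, Real.zero_rpow hγ0.ne', Real.zero_rpow hβ0.ne', mul_zero]
    · calc ‖x - y‖ ^ γ = ‖x - y‖ ^ (γ - β) * ‖x - y‖ ^ β := by
            rw [← Real.rpow_add h0]; ring_nf
        _ ≤ (2 * ρ) ^ (γ - β) * ‖x - y‖ ^ β :=
            mul_le_mul_of_nonneg_right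
              (Real.rpow_le_rpow h0.le hxy (by linarith))
              (Real.rpow_nonneg (norm_nonneg _) _)
  have h3 : ‖w x - w y‖ ≤ H / c * ‖x - y‖ ^ γ := by
    rw [div_mul_eq_mul_div, le_div_iff₀ hc0]
    linarith
  calc ‖w x - w y‖ ≤ H / c * ‖x - y‖ ^ γ := h3
    _ ≤ H / c * ((2 * ρ) ^ (γ - β) * ‖x - y‖ ^ β) :=
        mul_le_mul_of_nonneg_left h2 (div_nonneg hH hc0.le)
    _ = H / c * (2 * ρ) ^ (γ - β) * ‖x - y‖ ^ β := by ring
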